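/- If a sequence of polynomials (f_n)_{n≥1} over an integral domain satisfies both f_{m+n}(q) = f_m(q) + q^m f_n(q) and f_{mn}(q) = f_m(q)·f_n(q^m) for all positive integers m, n, then either f_n = 0 for all n, or f_n(q) = [n]_q for all n. -/
import Mathlib


noncomputable def qint (R : Type*) [CommRing R] (n : ℕ) : Polynomial R :=
  ∑ i ∈ Finset.range n, Polynomial.X ^ i

theorem quantum_uniqueness {R : Type*} [CommRing R] [IsDomain R]
    (f : ℕ → Polynomial R)
    (hadd : ∀ m n : ℕ, 0 < m → 0 < n → f (m + n) = f m + Polynomial.X ^ m * f n)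
    (hmul : ∀ m n : ℕ, 0 < m → 0 < n → f (m * n) = f m * (f n).comp (Polynomial.X ^ m)) :
    (∀ n : ℕ, 0 < n → f n = 0) ∨ (∀ n : ℕ, 0 < n → f n = qint R n) := by
  have h1 := hmul 1 1 one_pos one_pos
  simp [Polynomial.comp] at h1
  have h1' : f 1 * (f 1 - 1) = 0 := by ring_nf; linear_combination -h1
  rcases mul_eq_zero.mp h1' with h | h
  · left
    intro n hn
    induction n with
    | zero => omega
    | succ k ih =>
      rcases Nat.eq_zero_or_pos k with hk | hk
      · subst hk; simpa using h
      · rw [show k + 1 = 1 + k by ring, hadd 1 k one_pos hk, h, ih hk]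
        simp
  · have h : f 1 = 1 := sub_eq_zero.mp h
    right
    intro n hn
    induction n with
    | zero => omega
    | succ k ih =>
      rcases Nat.eq_zero_or_pos k with hk | hk
      · subst hk; simpa [qint] using h
      · rw [show k + 1 = 1 + k by ring, hadd 1 k one_pos hk, h, ih hk]
        simp [qint, Finset.mul_sum, Finset.sum_range_succ', pow_succ, mul_comm,
          add_comm]
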